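/- arXiv:1703.10411 — 2 statements merged into one kernel-verified Lean document; each statement's English description precedes it below -/
import Mathlib

section
/- Let z ∈ ℝ_{>0}, let v = (v_1,…,v_r) ∈ ℝ_{>0}^r, and let s ∈ ℂ with Re(s) > r. Then the series Σ_{m ∈ ℤ_{≥0}^r} (z + m·v)^{−s} defining Barnes' multiple zeta function ζ(s,v,z) converges absolutely. -/
lemma aux_pi_prod_summable (r : ℕ) (g : ℕ → ℝ) (hg0 : ∀ n, 0 ≤ g n)
    (hg : Summable g) :
    Summable fun m : Fin r → ℕ => ∏ i, g (m i) := by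
  induction r with
  | zero => exact .of_finite
  | succ n ih =>
    have h2 : Summable fun p : ℕ × (Fin n → ℕ) => g p.1 * ∏ i, g (p.2 i) :=
      Summable.mul_of_nonneg (f := g) (g := fun m : Fin n → ℕ => ∏ i, g (m i))
        hg ih hg0 (fun m => Finset.prod_nonneg fun i _ => hg0 _)
    have h3 := h2.comp_injective (Fin.consEquiv fun _ : Fin (n+1) => ℕ).symm.injective
    refine h3.congr fun m => ?_
    simp [Fin.consEquiv, Fin.prod_univ_succ, Fin.tail, Function.comp]

/-- Let `z ∈ ℝ_{>0}`, `v = (v_1, …, v_r) ∈ ℝ_{>0}^r` and `s ∈ ℂ` with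
`Re(s) > r`.  Then the series `∑_{m ∈ ℤ_{≥0}^r} (z + m ⬝ v)^{-s}` defining Barnes'
multiple zeta function converges absolutely. -/
theorem barnes_multiple_zeta_summable (r : ℕ) (z : ℝ) (v : Fin r → ℝ)
    (hz : 0 < z) (hv : ∀ i, 0 < v i) (s : ℂ) (hs : (r : ℝ) < s.re) :
    Summable fun m : Fin r → ℕ =>
      ‖((z + ∑ i, (m i : ℝ) * v i : ℝ) : ℂ) ^ (-s)‖ := by
  rcases Nat.eq_zero_or_pos r with hr | hr
  · subst hr; exact .of_finite
  set t := s.re with ht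
  have ht0 : 0 < t := lt_of_le_of_lt (by exact_mod_cast Nat.zero_le r) hs
  -- positivity of the terms
  have hxpos : ∀ m : Fin r → ℕ, 0 < z + ∑ i, (m i : ℝ) * v i := by
    intro m
    have : 0 ≤ ∑ i, (m i : ℝ) * v i :=
      Finset.sum_nonneg fun i _ => mul_nonneg (Nat.cast_nonneg _) (hv i).le
    linarith
  -- rewrite the norm
  have hnorm : ∀ m : Fin r → ℕ,
      ‖((z + ∑ i, (m i : ℝ) * v i : ℝ) : ℂ) ^ (-s)‖
        = (z + ∑ i, (m i : ℝ) * v i) ^ (-t) := by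
    intro m
    rw [Complex.norm_cpow_eq_rpow_re_of_pos (hxpos m)]
    simp [ht]
  haveI : Nonempty (Fin r) := Fin.pos_iff_nonempty.mp hr
  set w : ℝ := Finset.univ.inf' Finset.univ_nonempty v with hw
  have hwpos : 0 < w := by
    rw [hw]
    exact (Finset.lt_inf'_iff _).mpr fun i _ => hv i
  set ε : ℝ := min z w with hε
  have hεpos : 0 < ε := lt_min hz hwpos
  set q : ℝ := t / r with hq
  have hrpos : (0:ℝ) < r := by exact_mod_cast hr
  have hq1 : 1 < q := (one_lt_div hrpos).mpr hs
  -- the comparison function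
  set g : ℕ → ℝ := fun n => ((n:ℝ) + 1) ^ (-q) with hg
  have hg0 : ∀ n, 0 ≤ g n := fun n => Real.rpow_nonneg (by positivity) _
  have hgsum : Summable g := by
    have h1 : Summable (fun n : ℕ => (n:ℝ) ^ (-q)) :=
      Real.summable_nat_rpow.mpr (by linarith)
    have h2 := h1.comp_injective (add_left_injective 1)
    refine h2.congr fun n => ?_
    simp [hg, Function.comp]

  -- the bound
  have hbound : ∀ m : Fin r → ℕ,
      (z + ∑ i, (m i : ℝ) * v i) ^ (-t) ≤ ε ^ (-t) * ∏ i, g (m i) := by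
    intro m
    set S : ℝ := ∑ i, (m i : ℝ) with hS
    have hS0 : 0 ≤ S := Finset.sum_nonneg fun i _ => Nat.cast_nonneg _
    have h1 : ε * (1 + S) ≤ z + ∑ i, (m i : ℝ) * v i := by
      have : ε * (1 + S) = ε + ∑ i, ε * (m i : ℝ) := by
        rw [hS, mul_add, mul_one, Finset.mul_sum]
      rw [this]
      refine add_le_add (min_le_left _ _) (Finset.sum_le_sum fun i _ => ?_)
      rw [mul_comm (ε) _]
      refine mul_le_mul_of_nonneg_left ?_ (Nat.cast_nonneg _)
      exact le_trans (min_le_right _ _) (Finset.inf'_le _ (Finset.mem_univ i))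
    have hεS : 0 < ε * (1 + S) := by positivity
    have step1 : (z + ∑ i, (m i : ℝ) * v i) ^ (-t) ≤ (ε * (1 + S)) ^ (-t) :=
      Real.rpow_le_rpow_of_nonpos hεS h1 (by linarith)
    have step2 : (ε * (1 + S)) ^ (-t) = ε ^ (-t) * (1 + S) ^ (-t) :=
      Real.mul_rpow hεpos.le (by linarith)
    have key : (1 + S) ^ (-t) ≤ ∏ i, g (m i) := by
      have hprodpos : 0 < ∏ i, ((m i : ℝ) + 1) :=
        Finset.prod_pos fun i _ => by positivity
      have hle : ∏ i, ((m i : ℝ) + 1) ≤ (1 + S) ^ r := by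
        calc ∏ i, ((m i : ℝ) + 1) ≤ ∏ _i : Fin r, (1 + S) := by
              refine Finset.prod_le_prod (fun i _ => by positivity) fun i _ => ?_
              have : (m i : ℝ) ≤ S :=
                Finset.single_le_sum (f := fun i => (m i : ℝ))
                  (fun i _ => Nat.cast_nonneg _) (Finset.mem_univ i)
              linarith
          _ = (1 + S) ^ r := by rw [Finset.prod_const, Finset.card_univ, Fintype.card_fin]
      have heq : ((1 + S) ^ r) ^ (-q) = (1 + S) ^ (-t) := by
        rw [← Real.rpow_natCast (1 + S) r, ← Real.rpow_mul (by linarith)]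
        congr 1
        field_simp [hq]
        rw [hq]; field_simp [hrpos.ne']
      calc (1 + S) ^ (-t) = ((1 + S) ^ r) ^ (-q) := heq.symm
        _ ≤ (∏ i, ((m i : ℝ) + 1)) ^ (-q) :=
            Real.rpow_le_rpow_of_nonpos hprodpos hle (by linarith)
        _ = ∏ i, g (m i) := by
            rw [← Real.finset_prod_rpow _ _ (fun i _ => by positivity)]
    calc (z + ∑ i, (m i : ℝ) * v i) ^ (-t) ≤ (ε * (1 + S)) ^ (-t) := step1
      _ = ε ^ (-t) * (1 + S) ^ (-t) := step2
      _ ≤ ε ^ (-t) * ∏ i, g (m i) :=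
          mul_le_mul_of_nonneg_left key (Real.rpow_nonneg hεpos.le _)
  have hsum : Summable fun m : Fin r → ℕ => ε ^ (-t) * ∏ i, g (m i) :=
    (aux_pi_prod_summable r g hg0 hgsum).mul_left _
  refine Summable.of_nonneg_of_le (fun m => norm_nonneg _) (fun m => ?_) hsum
  rw [hnorm m]
  exact hbound m
end

section
/- Let exp_p : ℂ_p → ℂ_p^× be any group homomorphism from the additive group to the multiplicative group which coincides with the power series Σ_{n≥0} z^n/n! on some neighborhood of 0. Then for every z ∈ ℂ_p^× there exists N ∈ ℕ such that (exp_p(log_p z))^{p^N} = ⟨z⟩^{p^N}. In particular, if ord_p(z) = 0, then exp_p(log_p z)/z is a root of unity. -/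
open scoped Classical
open Filter

noncomputable section

namespace Stmt

open Topology

variable (p : ℕ) [Fact p.Prime] (Cp : Type*) [NormedField Cp]

/-- The basic data attached to `ℂ_p`: the canonical embedding of `ℤ_p`, a compatible system
`p^r` of rational powers of `p`, and the homomorphisms `ord_p`, `θ_p`. -/
structure CpData where
  ψ : ℤ_[p] →+* Cp
  hψ : ∀ x : ℤ_[p], ‖ψ x‖ = ‖x‖
  Ppow : ℚ → Cpˣ
  Ppow_add : ∀ r s : ℚ, Ppow (r + s) = Ppow r * Ppow s
  Ppow_one : (Ppow 1 : Cp) = (p : Cp)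
  ord : Cp → ℚ
  θ : Cp → Cp
  ord_mul : ∀ z w : Cp, z ≠ 0 → w ≠ 0 → ord (z * w) = ord z + ord w
  θ_mul : ∀ z w : Cp, z ≠ 0 → w ≠ 0 → θ (z * w) = θ z * θ w
  θ_root : ∀ z : Cp, z ≠ 0 → ∃ n : ℕ, 0 < n ∧ ¬ p ∣ n ∧ θ z ^ n = 1
  angle_lt : ∀ z : Cp, z ≠ 0 → ‖((Ppow (ord z) : Cp))⁻¹ * (θ z)⁻¹ * z - 1‖ < 1

variable {p Cp}

/-- `⟨z⟩ = p^{-ord_p z} θ_p(z)^{-1} z`. -/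
def CpData.angle (E : CpData p Cp) (z : Cp) : Cp :=
  ((E.Ppow (E.ord z) : Cp))⁻¹ * (E.θ z)⁻¹ * z

/-- The binomial coefficient `binom(t, k)` in `Cp`. -/
def CpData.binom (E : CpData p Cp) (t : Cp) (k : ℕ) : Cp :=
  (∏ i ∈ Finset.range k, (t - (i : Cp))) / (k.factorial : Cp)

/-- `u^t` for `u ∈ 1 + M`, by the binomial series. -/
def CpData.onePow (E : CpData p Cp) (u : Cp) (t : Cp) : Cp :=
  ∑' k : ℕ, E.binom t k * (u - 1) ^ k

/-- The Iwasawa `p`-adic logarithm. -/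
def CpData.logp (E : CpData p Cp) (z : Cp) : Cp :=
  ∑' k : ℕ, (-1 : Cp) ^ k * (E.angle z - 1) ^ (k + 1) / ((k : Cp) + 1)

/-- The finite average `p^{-(l_1+⋯+l_r)} ∑_{n_i < p^{l_i}} g(n)`. -/
def CpData.avg (E : CpData p Cp) {r : ℕ} (g : (Fin r → ℤ_[p]) → Cp) (l : Fin r → ℕ) : Cp :=
  ((p : Cp) ^ (∑ i, l i))⁻¹ *
    ∑ n ∈ Fintype.piFinset (fun i => Finset.range (p ^ (l i))),
      g (fun i => ((n i : ℕ) : ℤ_[p]))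

/-- `IterLim r S a` : the iterated limit `lim_{l_1 → ∞} ⋯ lim_{l_r → ∞} S (l_1, …, l_r)`
exists and equals `a` (innermost limit taken first). -/
def IterLim : (r : ℕ) → ((Fin r → ℕ) → Cp) → Cp → Prop
  | 0, S, a => S (fun i => i.elim0) = a
  | r + 1, S, a => ∃ g : ℕ → Cp, (∀ l0 : ℕ, IterLim r (fun l => S (Fin.cons l0 l)) (g l0)) ∧
      Tendsto g atTop (nhds a)

/-- `I(f)` : the value of the iterated limit of the averages (or `0` if it does not exist). -/
def CpData.Ival (E : CpData p Cp) {r : ℕ} (g : (Fin r → ℤ_[p]) → Cp) : Cp :=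
  if h : ∃ a : Cp, IterLim r (E.avg g) a then h.choose else 0

/-- The function `f_{z, v, s}`. -/
def CpData.fzvs (E : CpData p Cp) {r : ℕ} (v : Fin r → Cp) (z : Cp) (s : ℤ_[p])
    (x : Fin r → ℤ_[p]) : Cp :=
  ((z + ∑ i, E.ψ (x i) * v i) ^ r / ∏ i, v i) *
    E.onePow (E.angle (z + ∑ i, E.ψ (x i) * v i)) (-(E.ψ s))

/-- The `p`-adic multiple zeta function `ζ_p(s, v, z)`. -/
def CpData.zetaP (E : CpData p Cp) {r : ℕ} (s : ℤ_[p]) (v : Fin r → Cp) (z : Cp) : Cp :=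
  ((-1 : Cp) ^ r * E.Ival (E.fzvs v z s)) / ∏ k ∈ Finset.Icc 1 r, ((k : Cp) - E.ψ s)

/-- The `p`-adic log multiple gamma function `LΓ_p(z, v)`, the derivative at `s = 0` of
`ζ_p(s, v, z)`, i.e. the linear coefficient of its power series expansion at `0`. -/
def CpData.LGammaP (E : CpData p Cp) {r : ℕ} (v : Fin r → Cp) (z : Cp) : Cp :=
  if h : ∃ a : ℕ → Cp, ∃ ρ : ℝ, 0 < ρ ∧ ∀ s : ℤ_[p], ‖s‖ < ρ →
      HasSum (fun k : ℕ => a k * (E.ψ s) ^ k) (E.zetaP s v z)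
    then h.choose 1 else 0


section Aux

set_option linter.unusedSectionVars false

variable [IsUltrametricDist Cp] [CompleteSpace Cp] [CharZero Cp]

/-- The log series. -/
def Lfun (w : Cp) : Cp := ∑' k : ℕ, (-1 : Cp) ^ k * (w - 1) ^ (k + 1) / ((k : Cp) + 1)

lemma pR_one_lt : (1 : ℝ) < p := by
  exact_mod_cast (Fact.out : p.Prime).one_lt

lemma pR_pos : (0 : ℝ) < p := lt_trans one_pos pR_one_lt

lemma pinv_lt_one : ((p : ℝ))⁻¹ < 1 := by
  rw [inv_lt_one_iff₀]; right; exact pR_one_lt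

lemma pinv_nonneg : (0 : ℝ) ≤ ((p : ℝ))⁻¹ := inv_nonneg.2 (le_of_lt pR_pos)

/-- Lower bound for the norm of a nonzero natural number in `Cp`. -/
lemma norm_nat_lower (hp : ‖(p : Cp)‖ = (p : ℝ)⁻¹) (i : ℕ) (hi : 0 < i) :
    ((i : ℝ))⁻¹ ≤ ‖(i : Cp)‖ := by
  have hprime : p.Prime := Fact.out
  set v := i.factorization p with hv
  set m := i / p ^ v with hm'
  have hm : p ^ v * m = i := Nat.ordProj_mul_ordCompl_eq_self i p
  have hpm : ¬ p ∣ m := Nat.not_dvd_ordCompl hprime hi.ne'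
  have hmm : (1 : ℝ) ≤ ‖(m : Cp)‖ := by
    have hco : Nat.Coprime m p := ((Nat.Prime.coprime_iff_not_dvd hprime).mpr hpm).symm
    have hbez : (1 : ℤ) = (m : ℤ) * Nat.gcdA m p + (p : ℤ) * Nat.gcdB m p := by
      have := Nat.gcd_eq_gcd_ab m p
      rwa [hco, Nat.cast_one] at this
    have hcast : (1 : Cp) = (m : Cp) * ((Nat.gcdA m p : ℤ) : Cp)
        + (p : Cp) * ((Nat.gcdB m p : ℤ) : Cp) := by
      have := congrArg (fun z : ℤ => ((z : Cp))) hbez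
      push_cast at this ⊢
      exact this
    by_contra hlt
    push_neg at hlt
    have h1 : ‖(1 : Cp)‖ ≤ max (‖(m : Cp) * ((Nat.gcdA m p : ℤ) : Cp)‖)
        (‖(p : Cp) * ((Nat.gcdB m p : ℤ) : Cp)‖) := by
      rw [hcast]; exact IsUltrametricDist.norm_add_le_max _ _
    rw [norm_one] at h1
    have ha : ‖(m : Cp) * ((Nat.gcdA m p : ℤ) : Cp)‖ < 1 := by
      rw [norm_mul]
      calc ‖(m : Cp)‖ * ‖((Nat.gcdA m p : ℤ) : Cp)‖ ≤ ‖(m : Cp)‖ * 1 := by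
            exact mul_le_mul_of_nonneg_left (IsUltrametricDist.norm_intCast_le_one Cp _)
              (norm_nonneg _)
        _ = ‖(m : Cp)‖ := mul_one _
        _ < 1 := hlt
    have hb : ‖(p : Cp) * ((Nat.gcdB m p : ℤ) : Cp)‖ < 1 := by
      rw [norm_mul]
      calc ‖(p : Cp)‖ * ‖((Nat.gcdB m p : ℤ) : Cp)‖ ≤ ‖(p : Cp)‖ * 1 :=
            mul_le_mul_of_nonneg_left (IsUltrametricDist.norm_intCast_le_one Cp _)
              (norm_nonneg _)
        _ = ‖(p : Cp)‖ := mul_one _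
        _ < 1 := by rw [hp]; exact pinv_lt_one
    rcases max_cases (‖(m : Cp) * ((Nat.gcdA m p : ℤ) : Cp)‖)
        (‖(p : Cp) * ((Nat.gcdB m p : ℤ) : Cp)‖) with ⟨he, _⟩ | ⟨he, _⟩ <;> rw [he] at h1 <;>
      linarith
  have hiv : ‖(i : Cp)‖ = ((p : ℝ))⁻¹ ^ v * ‖(m : Cp)‖ := by
    rw [← hm]
    push_cast
    rw [norm_mul, norm_pow, hp]
  rw [hiv]
  have hpv_le : (p : ℝ) ^ v ≤ (i : ℝ) := by
    have : p ^ v ≤ i := Nat.ordProj_le p hi.ne'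
    exact_mod_cast this
  have h0 : (0 : ℝ) < (p : ℝ) ^ v := pow_pos pR_pos v
  have h1 : ((i : ℝ))⁻¹ ≤ ((p : ℝ) ^ v)⁻¹ := by
    apply inv_anti₀ h0 hpv_le
  calc ((i : ℝ))⁻¹ ≤ ((p : ℝ) ^ v)⁻¹ := h1
    _ = ((p : ℝ))⁻¹ ^ v * 1 := by rw [inv_pow, mul_one]
    _ ≤ ((p : ℝ))⁻¹ ^ v * ‖(m : Cp)‖ := by
        exact mul_le_mul_of_nonneg_left hmm (pow_nonneg pinv_nonneg v)

/-- Norm of division by a nonzero natural number. -/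
lemma norm_div_nat_le (hp : ‖(p : Cp)‖ = (p : ℝ)⁻¹) (A : Cp) (j : ℕ) (hj : 0 < j) :
    ‖A / (j : Cp)‖ ≤ ‖A‖ * (j : ℝ) := by
  have hjR : (0 : ℝ) < (j : ℝ) := by exact_mod_cast hj
  have hlow := norm_nat_lower (Cp := Cp) hp j hj
  have hpos : (0 : ℝ) < ‖(j : Cp)‖ := lt_of_lt_of_le (inv_pos.2 hjR) hlow
  rw [norm_div, div_le_iff₀ hpos]
  calc ‖A‖ = ‖A‖ * ((j : ℝ) * (j : ℝ)⁻¹) := by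
        rw [mul_inv_cancel₀ (ne_of_gt hjR), mul_one]
    _ = ‖A‖ * (j : ℝ) * (j : ℝ)⁻¹ := by ring
    _ ≤ ‖A‖ * (j : ℝ) * ‖(j : Cp)‖ := by
        exact mul_le_mul_of_nonneg_left hlow (by positivity)


/-- Ultrametric estimate: a finite product of elements close to 1 is close to 1. -/
lemma prod_sub_one_norm (s : Finset ℕ) (f : ℕ → Cp) {c : ℝ} (h0 : 0 ≤ c) (hc : c ≤ 1)
    (h : ∀ i ∈ s, ‖f i - 1‖ ≤ c) : ‖(∏ i ∈ s, f i) - 1‖ ≤ c := by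
  classical
  induction s using Finset.induction_on with
  | empty => simpa using h0
  | @insert a s' hx ih =>
    have hP : ‖(∏ i ∈ s', f i) - 1‖ ≤ c := ih (fun i hi => h i (Finset.mem_insert_of_mem hi))
    have hfa : ‖f a - 1‖ ≤ c := h a (Finset.mem_insert_self a s')
    have hfa_norm : ‖f a‖ ≤ 1 := by
      calc ‖f a‖ = ‖(f a - 1) + 1‖ := by ring_nf
        _ ≤ max ‖f a - 1‖ ‖(1 : Cp)‖ := IsUltrametricDist.norm_add_le_max _ _
        _ ≤ 1 := by rw [norm_one]; exact max_le (le_trans hfa hc) le_rfl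
    rw [Finset.prod_insert hx]
    have key : f a * (∏ i ∈ s', f i) - 1 = f a * ((∏ i ∈ s', f i) - 1) + (f a - 1) := by ring
    rw [key]
    calc ‖f a * ((∏ i ∈ s', f i) - 1) + (f a - 1)‖
        ≤ max (‖f a * ((∏ i ∈ s', f i) - 1)‖) (‖f a - 1‖) :=
          IsUltrametricDist.norm_add_le_max _ _
      _ ≤ c := by
          apply max_le _ hfa
          rw [norm_mul]
          calc ‖f a‖ * ‖(∏ i ∈ s', f i) - 1‖ ≤ 1 * c := by
                exact mul_le_mul hfa_norm hP (norm_nonneg _) one_pos.le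
            _ = c := one_mul c

/-- `(-1)^k * choose (m-1) k = ∏_{i<k} (1 - m/(i+1))` in `Cp`, for `k < m`. -/
lemma neg_one_pow_choose (m : ℕ) (hm : 0 < m) :
    ∀ k : ℕ, k < m → ((-1 : Cp)) ^ k * (((m - 1).choose k : ℕ) : Cp)
      = ∏ i ∈ Finset.range k, (1 - (m : Cp) / ((i : Cp) + 1)) := by
  intro k
  induction k with
  | zero => intro _; simp
  | succ k ih =>
    intro hk
    have hk' : k < m := lt_trans (Nat.lt_succ_self k) hk
    have hkm : k ≤ m - 1 := Nat.le_sub_one_of_lt hk'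
    have hnat : (m - 1).choose (k + 1) * (k + 1) = (m - 1).choose k * ((m - 1) - k) :=
      Nat.choose_succ_right_eq (m - 1) k
    have hcast : (((m - 1).choose (k + 1) : ℕ) : Cp) * ((k : Cp) + 1)
        = (((m - 1).choose k : ℕ) : Cp) * ((m : Cp) - 1 - (k : Cp)) := by
      have h1 : (((m - 1) - k : ℕ) : Cp) = (m : Cp) - 1 - (k : Cp) := by
        have e1 : ((m - 1 - k : ℕ) : Cp) = ((m - 1 : ℕ) : Cp) - (k : Cp) := Nat.cast_sub hkm
        have e2 : ((m - 1 : ℕ) : Cp) = (m : Cp) - 1 := by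
          rw [Nat.cast_sub hm, Nat.cast_one]
        rw [e1, e2]
      have := congrArg (fun n : ℕ => ((n : ℕ) : Cp)) hnat
      push_cast at this
      rw [← h1]
      push_cast
      exact this
    have hkne : ((k : Cp) + 1) ≠ 0 := by
      have : (((k + 1 : ℕ)) : Cp) ≠ 0 := Nat.cast_ne_zero.mpr (Nat.succ_ne_zero k)
      push_cast at this
      exact this
    have expand : (1 : Cp) - (m : Cp) / ((k : Cp) + 1)
        = ((k : Cp) + 1 - (m : Cp)) / ((k : Cp) + 1) := by
      field_simp
    have hch : (((m - 1).choose (k + 1) : ℕ) : Cp)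
        = (((m - 1).choose k : ℕ) : Cp) * ((m : Cp) - 1 - (k : Cp)) / ((k : Cp) + 1) :=
      (eq_div_iff hkne).mpr hcast
    rw [Finset.prod_range_succ, ← ih hk', expand, hch, pow_succ]
    ring

/-- Estimate `‖choose (p^n - 1) k - (-1)^k‖ ≤ k p^{-n}` for `k < p^n`. -/
lemma choose_est (hp : ‖(p : Cp)‖ = (p : ℝ)⁻¹) {n k : ℕ} (hk : k < p ^ n) :
    ‖(((p ^ n - 1).choose k : ℕ) : Cp) - (-1 : Cp) ^ k‖ ≤ (k : ℝ) * ((p : ℝ)⁻¹) ^ n := by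
  have hprime : p.Prime := Fact.out
  set m := p ^ n with hmdef
  have hm : 0 < m := pow_pos hprime.pos n
  have hid := neg_one_pow_choose (Cp := Cp) m hm k hk
  have hmnorm : ‖(m : Cp)‖ = ((p : ℝ)⁻¹) ^ n := by
    rw [hmdef]; push_cast; rw [norm_pow, hp]
  have hprod : ‖(∏ i ∈ Finset.range k, (1 - (m : Cp) / ((i : Cp) + 1))) - 1‖
      ≤ (k : ℝ) * ((p : ℝ)⁻¹) ^ n := by
    apply prod_sub_one_norm
    · positivity
    · have hk' : (k : ℝ) ≤ (p : ℝ) ^ n := by exact_mod_cast hk.le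
      calc (k : ℝ) * ((p : ℝ)⁻¹) ^ n ≤ (p : ℝ) ^ n * ((p : ℝ)⁻¹) ^ n :=
            mul_le_mul_of_nonneg_right hk' (by positivity)
        _ = 1 := by rw [← mul_pow, mul_inv_cancel₀ (ne_of_gt pR_pos), one_pow]
    · intro i hi
      have hi' : i + 1 ≤ k := Finset.mem_range.mp hi
      have hrw : (1 : Cp) - (m : Cp) / ((i : Cp) + 1) - 1 = -((m : Cp) / ((i : Cp) + 1)) := by
        ring
      rw [hrw, norm_neg]
      have hcast : ((i : Cp) + 1) = (((i + 1 : ℕ)) : Cp) := by push_cast; ring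
      rw [hcast]
      calc ‖(m : Cp) / ((i + 1 : ℕ) : Cp)‖ ≤ ‖(m : Cp)‖ * ((i + 1 : ℕ) : ℝ) :=
            norm_div_nat_le hp _ _ (Nat.succ_pos i)
        _ = ((i + 1 : ℕ) : ℝ) * ((p : ℝ)⁻¹) ^ n := by rw [hmnorm]; ring
        _ ≤ (k : ℝ) * ((p : ℝ)⁻¹) ^ n := by
            apply mul_le_mul_of_nonneg_right _ (by positivity)
            exact_mod_cast hi'
  have hsq : ((-1 : Cp)) ^ k * ((-1 : Cp)) ^ k = 1 := by
    rw [← mul_pow]; norm_num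
  have hrw2 : (((m - 1).choose k : ℕ) : Cp) - (-1 : Cp) ^ k
      = (-1 : Cp) ^ k * ((∏ i ∈ Finset.range k, (1 - (m : Cp) / ((i : Cp) + 1))) - 1) := by
    rw [← hid]
    linear_combination (-(((m - 1).choose k : ℕ) : Cp)) * hsq
  rw [hrw2, norm_mul, norm_pow, norm_neg, norm_one, one_pow, one_mul]
  exact hprod

lemma norm_logterm_le (hp : ‖(p : Cp)‖ = (p : ℝ)⁻¹) (x : Cp) (k : ℕ) :
    ‖(-1 : Cp) ^ k * x ^ (k + 1) / ((k : Cp) + 1)‖ ≤ ((k : ℝ) + 1) * ‖x‖ ^ (k + 1) := by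
  have hcast : ((k : Cp) + 1) = (((k + 1 : ℕ)) : Cp) := by push_cast; ring
  rw [hcast]
  calc ‖(-1 : Cp) ^ k * x ^ (k + 1) / ((k + 1 : ℕ) : Cp)‖
      ≤ ‖(-1 : Cp) ^ k * x ^ (k + 1)‖ * ((k + 1 : ℕ) : ℝ) :=
        norm_div_nat_le hp _ _ (Nat.succ_pos k)
    _ = ((k : ℝ) + 1) * ‖x‖ ^ (k + 1) := by
        rw [norm_mul, norm_pow, norm_pow, norm_neg, norm_one, one_pow, one_mul]
        push_cast; ring

lemma tendsto_poly_geo {r : ℝ} (h0 : 0 ≤ r) (h1 : r < 1) (d : ℕ) :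
    Tendsto (fun k : ℕ => ((k : ℝ) + 1) ^ d * r ^ (k + 1)) atTop (𝓝 0) := by
  have hs : Summable (fun k : ℕ => (k : ℝ) ^ d * r ^ k) := by
    apply Summable.of_norm
    exact summable_norm_pow_mul_geometric_of_norm_lt_one d
      (by rwa [Real.norm_eq_abs, abs_of_nonneg h0])
  have h2 : Tendsto (fun k : ℕ => (k : ℝ) ^ d * r ^ k) atTop (𝓝 0) := hs.tendsto_atTop_zero
  have h3 := h2.comp (Filter.tendsto_add_atTop_nat 1)
  have : (fun k : ℕ => ((k : ℝ) + 1) ^ d * r ^ (k + 1))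
      = (fun k : ℕ => (k : ℝ) ^ d * r ^ k) ∘ (fun k => k + 1) := by
    funext k; simp only [Function.comp_apply]; push_cast; ring
  rw [this]
  exact h3

lemma exists_bound (g : ℕ → ℝ) (h : Tendsto g atTop (𝓝 0)) (hnn : ∀ k, 0 ≤ g k) :
    ∃ K : ℝ, 0 ≤ K ∧ ∀ k, g k ≤ K := by
  have hb : BddAbove (Set.range g) := h.bddAbove_range
  exact ⟨sSup (Set.range g), le_trans (hnn 0) (le_csSup hb ⟨0, rfl⟩),
    fun k => le_csSup hb ⟨k, rfl⟩⟩

lemma summable_logterm (hp : ‖(p : Cp)‖ = (p : ℝ)⁻¹) {x : Cp} (hx : ‖x‖ < 1) :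
    Summable (fun k : ℕ => (-1 : Cp) ^ k * x ^ (k + 1) / ((k : Cp) + 1)) := by
  apply NonarchimedeanAddGroup.summable_of_tendsto_cofinite_zero
  rw [Nat.cofinite_eq_atTop, tendsto_zero_iff_norm_tendsto_zero]
  apply squeeze_zero (fun k => norm_nonneg _)
    (fun k => by simpa [pow_one] using norm_logterm_le hp x k)
  simpa [pow_one] using tendsto_poly_geo (norm_nonneg x) hx 1

/-- Lemma A : `(w^{p^n} - 1)/p^n → log w`. -/
lemma tendsto_Lfun (hp : ‖(p : Cp)‖ = (p : ℝ)⁻¹) {w : Cp} (hw : ‖w - 1‖ < 1) :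
    Tendsto (fun n : ℕ => (w ^ (p ^ n) - 1) / ((p : Cp) ^ n)) atTop (𝓝 (Lfun w)) := by
  have hprime : p.Prime := Fact.out
  set x := w - 1 with hx
  have hw1 : w = x + 1 := by rw [hx]; ring
  set c : ℕ → Cp := fun k => (-1 : Cp) ^ k * x ^ (k + 1) / ((k : Cp) + 1) with hc
  have Sc : Summable c := summable_logterm hp hw
  have hL : Lfun w = ∑' k, c k := rfl
  set φ : ℕ → ℕ → Cp :=
    fun n k => (((p ^ n).choose (k + 1) : ℕ) : Cp) * x ^ (k + 1) / ((p : Cp) ^ n) with hφ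
  have hφ0 : ∀ n k, p ^ n ≤ k → φ n k = 0 := by
    intro n k hk
    have h0 : (p ^ n).choose (k + 1) = 0 := Nat.choose_eq_zero_of_lt (Nat.lt_succ_of_le hk)
    simp [hφ, h0]
  have Sφ : ∀ n, Summable (φ n) := fun n =>
    summable_of_ne_finset_zero (s := Finset.range (p ^ n))
      (fun k hk => hφ0 n k (by simpa using hk))
  have hpne : ∀ n : ℕ, ((p : Cp) ^ n) ≠ 0 := by
    intro n
    apply pow_ne_zero
    exact_mod_cast (Nat.cast_ne_zero (R := Cp)).mpr hprime.ne_zero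
  have hrepr : ∀ n, (w ^ (p ^ n) - 1) / ((p : Cp) ^ n) = ∑' k, φ n k := by
    intro n
    rw [tsum_eq_sum (s := Finset.range (p ^ n)) (fun k hk => hφ0 n k (by simpa using hk))]
    have hpow : w ^ (p ^ n)
        = ∑ j ∈ Finset.range (p ^ n + 1), x ^ j * (((p ^ n).choose j : ℕ) : Cp) := by
      rw [hw1, add_pow]
      simp only [one_pow, mul_one]
    have hsub : w ^ (p ^ n) - 1
        = ∑ k ∈ Finset.range (p ^ n), x ^ (k + 1) * (((p ^ n).choose (k + 1) : ℕ) : Cp) := by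
      rw [hpow, Finset.sum_range_succ']
      simp
    rw [hsub, Finset.sum_div]
    apply Finset.sum_congr rfl
    intro k _
    rw [hφ]
    ring
  obtain ⟨K₁, hK₁0, hK₁⟩ := exists_bound (fun k => ((k : ℝ) + 1) ^ 2 * ‖x‖ ^ (k + 1))
    (tendsto_poly_geo (norm_nonneg x) hw 2) (fun k => by positivity)
  set s := Real.sqrt ‖x‖ with hs
  have hs0 : 0 ≤ s := Real.sqrt_nonneg _
  have hs1 : s < 1 := by
    rw [hs, show (1 : ℝ) = Real.sqrt 1 by simp]
    exact Real.sqrt_lt_sqrt (norm_nonneg x) hw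
  have hrs : ‖x‖ = s * s := (Real.mul_self_sqrt (norm_nonneg x)).symm
  obtain ⟨K₂, hK₂0, hK₂⟩ := exists_bound (fun k => ((k : ℝ) + 1) ^ 1 * s ^ (k + 1))
    (tendsto_poly_geo hs0 hs1 1) (fun k => by positivity)
  have key : ∀ n k, ‖c k - φ n k‖ ≤ K₁ * ((p : ℝ)⁻¹) ^ n + K₂ * s ^ (p ^ n) := by
    intro n k
    rcases lt_or_ge k (p ^ n) with hcase | hcase
    · have hm : 0 < p ^ n := pow_pos hprime.pos n
      have hnat : p ^ n * (p ^ n - 1).choose k = (p ^ n).choose (k + 1) * (k + 1) := by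
        have h := Nat.add_one_mul_choose_eq (p ^ n - 1) k
        rw [Nat.sub_add_cancel hm] at h
        exact h
      have hkne : ((k : Cp) + 1) ≠ 0 := by
        have h : (((k + 1 : ℕ)) : Cp) ≠ 0 := Nat.cast_ne_zero.mpr (Nat.succ_ne_zero k)
        push_cast at h
        exact h
      have hcastid : ((p : Cp)) ^ n * (((p ^ n - 1).choose k : ℕ) : Cp)
          = (((p ^ n).choose (k + 1) : ℕ) : Cp) * ((k : Cp) + 1) := by
        have h := congrArg (fun t : ℕ => ((t : ℕ) : Cp)) hnat
        push_cast at h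
        exact h
      have hφeq : φ n k = (((p ^ n - 1).choose k : ℕ) : Cp) * x ^ (k + 1) / ((k : Cp) + 1) := by
        show (((p ^ n).choose (k + 1) : ℕ) : Cp) * x ^ (k + 1) / ((p : Cp) ^ n)
          = (((p ^ n - 1).choose k : ℕ) : Cp) * x ^ (k + 1) / ((k : Cp) + 1)
        rw [div_eq_div_iff (hpne n) hkne]
        linear_combination (-(x ^ (k + 1))) * hcastid
      have hdiff : c k - φ n k
          = ((-1 : Cp) ^ k - (((p ^ n - 1).choose k : ℕ) : Cp)) * x ^ (k + 1) / ((k : Cp) + 1) := by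
        rw [hc, hφeq]
        ring
      have hest := choose_est (Cp := Cp) hp (n := n) (k := k) hcase
      have hcast2 : ((k : Cp) + 1) = (((k + 1 : ℕ)) : Cp) := by push_cast; ring
      have hnorm1 : ‖(-1 : Cp) ^ k - (((p ^ n - 1).choose k : ℕ) : Cp)‖
          ≤ (k : ℝ) * ((p : ℝ)⁻¹) ^ n := by
        rw [← norm_neg, neg_sub]
        exact hest
      rw [hdiff, hcast2]
      calc ‖((-1 : Cp) ^ k - (((p ^ n - 1).choose k : ℕ) : Cp)) * x ^ (k + 1) / ((k + 1 : ℕ) : Cp)‖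
          ≤ ‖((-1 : Cp) ^ k - (((p ^ n - 1).choose k : ℕ) : Cp)) * x ^ (k + 1)‖ * ((k + 1 : ℕ) : ℝ) :=
            norm_div_nat_le hp _ _ (Nat.succ_pos k)
        _ ≤ ((k : ℝ) * ((p : ℝ)⁻¹) ^ n) * ‖x‖ ^ (k + 1) * ((k + 1 : ℕ) : ℝ) := by
            rw [norm_mul, norm_pow]
            apply mul_le_mul_of_nonneg_right _ (by positivity)
            exact mul_le_mul_of_nonneg_right hnorm1 (by positivity)
        _ ≤ K₁ * ((p : ℝ)⁻¹) ^ n := by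
            have h1 : ((k : ℝ) * ((p : ℝ)⁻¹) ^ n) * ‖x‖ ^ (k + 1) * ((k + 1 : ℕ) : ℝ)
                = ((k : ℝ) * ((k + 1 : ℕ) : ℝ) * ‖x‖ ^ (k + 1)) * ((p : ℝ)⁻¹) ^ n := by ring
            rw [h1]
            apply mul_le_mul_of_nonneg_right _ (by positivity)
            calc (k : ℝ) * ((k + 1 : ℕ) : ℝ) * ‖x‖ ^ (k + 1)
                ≤ ((k : ℝ) + 1) ^ 2 * ‖x‖ ^ (k + 1) := by
                  apply mul_le_mul_of_nonneg_right _ (by positivity)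
                  push_cast
                  nlinarith [Nat.cast_nonneg (α := ℝ) k]
              _ ≤ K₁ := hK₁ k
        _ ≤ K₁ * ((p : ℝ)⁻¹) ^ n + K₂ * s ^ (p ^ n) := le_add_of_nonneg_right (by positivity)
    · rw [hφ0 n k hcase, sub_zero]
      have h1 : ‖c k‖ ≤ ((k : ℝ) + 1) * ‖x‖ ^ (k + 1) := norm_logterm_le hp x k
      have h2 : ((k : ℝ) + 1) * ‖x‖ ^ (k + 1) = (((k : ℝ) + 1) * s ^ (k + 1)) * s ^ (k + 1) := by
        rw [hrs, mul_pow]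
        ring
      have h3 : (((k : ℝ) + 1) * s ^ (k + 1)) * s ^ (k + 1) ≤ K₂ * s ^ (p ^ n) := by
        apply mul_le_mul
        · simpa [pow_one] using hK₂ k
        · exact pow_le_pow_of_le_one hs0 hs1.le (Nat.le_succ_of_le hcase)
        · positivity
        · exact hK₂0
      calc ‖c k‖ ≤ ((k : ℝ) + 1) * ‖x‖ ^ (k + 1) := h1
        _ ≤ K₂ * s ^ (p ^ n) := by rw [h2]; exact h3
        _ ≤ K₁ * ((p : ℝ)⁻¹) ^ n + K₂ * s ^ (p ^ n) := le_add_of_nonneg_left (by positivity)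
  have hnormbound : ∀ n, ‖(w ^ (p ^ n) - 1) / ((p : Cp) ^ n) - Lfun w‖
      ≤ K₁ * ((p : ℝ)⁻¹) ^ n + K₂ * s ^ (p ^ n) := by
    intro n
    have hdiffsum : Lfun w - (w ^ (p ^ n) - 1) / ((p : Cp) ^ n) = ∑' k, (c k - φ n k) := by
      rw [hL, hrepr n]
      exact ((Sc.hasSum.sub (Sφ n).hasSum).tsum_eq).symm
    rw [← norm_neg, neg_sub, hdiffsum]
    exact IsUltrametricDist.norm_tsum_le_of_forall_le_of_nonneg (by positivity) (key n)
  rw [← tendsto_sub_nhds_zero_iff, tendsto_zero_iff_norm_tendsto_zero]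
  apply squeeze_zero (fun n => norm_nonneg _) hnormbound
  have hb1 : Tendsto (fun n : ℕ => K₁ * ((p : ℝ)⁻¹) ^ n) atTop (𝓝 0) := by
    simpa using (tendsto_pow_atTop_nhds_zero_of_lt_one pinv_nonneg pinv_lt_one).const_mul K₁
  have hb2 : Tendsto (fun n : ℕ => K₂ * s ^ (p ^ n)) atTop (𝓝 0) := by
    have h := (tendsto_pow_atTop_nhds_zero_of_lt_one hs0 hs1).comp
      (tendsto_pow_atTop_atTop_of_one_lt hprime.one_lt)
    simpa [Function.comp] using h.const_mul K₂
  simpa using hb1.add hb2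


lemma norm_le_one_of_sub_lt {w : Cp} (hw : ‖w - 1‖ < 1) : ‖w‖ ≤ 1 := by
  calc ‖w‖ = ‖(w - 1) + 1‖ := by ring_nf
    _ ≤ max ‖w - 1‖ ‖(1 : Cp)‖ := IsUltrametricDist.norm_add_le_max _ _
    _ ≤ 1 := by rw [norm_one]; exact max_le hw.le le_rfl

lemma norm_pow_sub_one_le {w : Cp} (hw : ‖w - 1‖ < 1) (n : ℕ) :
    ‖w ^ n - 1‖ ≤ ‖w - 1‖ := by
  have hgeom := geom_sum_mul w n
  have h1 : ‖∑ i ∈ Finset.range n, w ^ i‖ ≤ 1 := by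
    apply IsUltrametricDist.norm_sum_le_of_forall_le_of_nonneg zero_le_one
    intro i _
    rw [norm_pow]
    exact pow_le_one₀ (norm_nonneg w) (norm_le_one_of_sub_lt hw)
  calc ‖w ^ n - 1‖ = ‖(∑ i ∈ Finset.range n, w ^ i) * (w - 1)‖ := by rw [hgeom]
    _ = ‖∑ i ∈ Finset.range n, w ^ i‖ * ‖w - 1‖ := norm_mul _ _
    _ ≤ 1 * ‖w - 1‖ := mul_le_mul_of_nonneg_right h1 (norm_nonneg _)
    _ = ‖w - 1‖ := one_mul _

/-- `log(w^p) = p log w`. -/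
lemma Lfun_pow_p (hp : ‖(p : Cp)‖ = (p : ℝ)⁻¹) {w : Cp} (hw : ‖w - 1‖ < 1) :
    Lfun (w ^ p) = (p : Cp) * Lfun w := by
  have hprime : p.Prime := Fact.out
  have hwp : ‖w ^ p - 1‖ < 1 := lt_of_le_of_lt (norm_pow_sub_one_le hw p) hw
  have hpne : ((p : Cp)) ≠ 0 := Nat.cast_ne_zero.mpr hprime.ne_zero
  have A2 := tendsto_Lfun hp hwp
  have A1 := (tendsto_Lfun hp hw).comp (Filter.tendsto_add_atTop_nat 1)
  have heq : (fun n : ℕ => ((w ^ p) ^ (p ^ n) - 1) / ((p : Cp) ^ n))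
      = fun n : ℕ => (p : Cp) * ((w ^ (p ^ (n + 1)) - 1) / ((p : Cp) ^ (n + 1))) := by
    funext n
    have h1 : (w ^ p) ^ (p ^ n) = w ^ (p ^ (n + 1)) := by
      rw [← pow_mul, pow_succ, mul_comm (p ^ n) p]
    have h2 : ((p : Cp) ^ (n + 1)) = (p : Cp) * (p : Cp) ^ n := by rw [pow_succ]; ring
    rw [h1, h2]
    field_simp
  rw [heq] at A2
  have A1' : Tendsto (fun n : ℕ => (p : Cp) * ((w ^ (p ^ (n + 1)) - 1) / ((p : Cp) ^ (n + 1))))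
      atTop (𝓝 ((p : Cp) * Lfun w)) := by
    apply Tendsto.const_mul
    exact A1
  exact tendsto_nhds_unique A2 A1'

/-- Iterated version: `log(w^{p^N}) = p^N log w`. -/
lemma Lfun_pow_pN (hp : ‖(p : Cp)‖ = (p : ℝ)⁻¹) {w : Cp} (hw : ‖w - 1‖ < 1) (N : ℕ) :
    ‖w ^ (p ^ N) - 1‖ < 1 ∧ Lfun (w ^ (p ^ N)) = (p : Cp) ^ N * Lfun w := by
  induction N with
  | zero => simpa using hw
  | succ N ih =>
    obtain ⟨ih1, ih2⟩ := ih
    have h1 : w ^ (p ^ (N + 1)) = (w ^ (p ^ N)) ^ p := by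
      rw [← pow_mul, pow_succ]
    constructor
    · rw [h1]
      exact lt_of_le_of_lt (norm_pow_sub_one_le ih1 p) ih1
    · rw [h1, Lfun_pow_p hp ih1, ih2, pow_succ]
      ring

/-- Decay of `w^{p^n} - 1`. -/
lemma tendsto_pow_sub_one (hp : ‖(p : Cp)‖ = (p : ℝ)⁻¹) {w : Cp} (hw : ‖w - 1‖ < 1) :
    Tendsto (fun n : ℕ => w ^ (p ^ n) - 1) atTop (𝓝 0) := by
  have hprime : p.Prime := Fact.out
  have hpnorm : ‖(p : Cp)‖ < 1 := by rw [hp]; exact pinv_lt_one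
  have h1 : Tendsto (fun n : ℕ => (p : Cp) ^ n) atTop (𝓝 0) :=
    tendsto_pow_atTop_nhds_zero_of_norm_lt_one hpnorm
  have h2 := h1.mul (tendsto_Lfun hp hw)
  rw [zero_mul] at h2
  have heq : (fun n : ℕ => w ^ (p ^ n) - 1)
      = fun n : ℕ => (p : Cp) ^ n * ((w ^ (p ^ n) - 1) / ((p : Cp) ^ n)) := by
    funext n
    rw [mul_div_cancel₀]
    apply pow_ne_zero
    exact Nat.cast_ne_zero.mpr hprime.ne_zero
  rw [heq]
  exact h2

/-- Injectivity of the logarithm on the ball of radius `p^{-2}`. -/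
lemma Lfun_inj (hp : ‖(p : Cp)‖ = (p : ℝ)⁻¹) {w w' : Cp}
    (hw : ‖w - 1‖ ≤ ((p : ℝ)⁻¹) ^ 2) (hw' : ‖w' - 1‖ ≤ ((p : ℝ)⁻¹) ^ 2)
    (h : Lfun w = Lfun w') : w = w' := by
  have hprime : p.Prime := Fact.out
  set x := w - 1 with hx
  set y := w' - 1 with hy
  have hρ1 : ((p : ℝ)⁻¹) ^ 2 < 1 := pow_lt_one₀ pinv_nonneg pinv_lt_one (by norm_num)
  have hx1 : ‖x‖ < 1 := lt_of_le_of_lt hw hρ1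
  have hy1 : ‖y‖ < 1 := lt_of_le_of_lt hw' hρ1
  set d : ℕ → Cp := fun k => (-1 : Cp) ^ k * x ^ (k + 1) / ((k : Cp) + 1)
    - (-1 : Cp) ^ k * y ^ (k + 1) / ((k : Cp) + 1) with hd
  have Sd : Summable d := (summable_logterm hp hx1).sub (summable_logterm hp hy1)
  have hsum : ∑' k, d k = 0 := by
    rw [((summable_logterm hp hx1).hasSum.sub (summable_logterm hp hy1).hasSum).tsum_eq]
    have : Lfun w - Lfun w' = 0 := by rw [h, sub_self]
    exact this
  have hd0 : d 0 = x - y := by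
    simp [hd]
  have htail : ‖∑' k, d (k + 1)‖ ≤ (p : ℝ)⁻¹ * ‖x - y‖ := by
    apply IsUltrametricDist.norm_tsum_le_of_forall_le_of_nonneg (by positivity)
    intro k
    have hfaceq : d (k + 1) = (-1 : Cp) ^ (k + 1) * ((x ^ (k + 2) - y ^ (k + 2))
        / (((k + 1) : Cp) + 1)) := by
      rw [hd]
      push_cast
      ring
    have hgeo : x ^ (k + 2) - y ^ (k + 2)
        = (∑ i ∈ Finset.range (k + 2), x ^ i * y ^ (k + 2 - 1 - i)) * (x - y) :=
      (geom_sum₂_mul x y (k + 2)).symm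
    have hsumnorm : ‖∑ i ∈ Finset.range (k + 2), x ^ i * y ^ (k + 2 - 1 - i)‖
        ≤ (((p : ℝ)⁻¹) ^ 2) ^ (k + 1) := by
      apply IsUltrametricDist.norm_sum_le_of_forall_le_of_nonneg (by positivity)
      intro i hi
      have hi' : i ≤ k + 1 := by
        have := Finset.mem_range.mp hi
        omega
      rw [norm_mul, norm_pow, norm_pow]
      calc ‖x‖ ^ i * ‖y‖ ^ (k + 2 - 1 - i)
          ≤ (((p : ℝ)⁻¹) ^ 2) ^ i * (((p : ℝ)⁻¹) ^ 2) ^ (k + 2 - 1 - i) := by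
            apply mul_le_mul
            · exact pow_le_pow_left₀ (norm_nonneg x) hw i
            · exact pow_le_pow_left₀ (norm_nonneg y) hw' _
            · positivity
            · positivity
        _ = (((p : ℝ)⁻¹) ^ 2) ^ (i + (k + 2 - 1 - i)) := by rw [pow_add]
        _ = (((p : ℝ)⁻¹) ^ 2) ^ (k + 1) := by
            congr 1
            omega
    have hknorm : ‖(x ^ (k + 2) - y ^ (k + 2)) / (((k + 2 : ℕ)) : Cp)‖
        ≤ ((((p : ℝ)⁻¹) ^ 2) ^ (k + 1) * ‖x - y‖) * ((k + 2 : ℕ) : ℝ) := by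
      calc ‖(x ^ (k + 2) - y ^ (k + 2)) / (((k + 2 : ℕ)) : Cp)‖
          ≤ ‖x ^ (k + 2) - y ^ (k + 2)‖ * ((k + 2 : ℕ) : ℝ) :=
            norm_div_nat_le hp _ _ (by omega)
        _ ≤ ((((p : ℝ)⁻¹) ^ 2) ^ (k + 1) * ‖x - y‖) * ((k + 2 : ℕ) : ℝ) := by
            apply mul_le_mul_of_nonneg_right _ (by positivity)
            rw [hgeo, norm_mul]
            exact mul_le_mul_of_nonneg_right hsumnorm (norm_nonneg _)
    have hcast3 : (((k + 1) : Cp) + 1) = (((k + 2 : ℕ)) : Cp) := by push_cast; ring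
    have hnormd : ‖d (k + 1)‖ = ‖(x ^ (k + 2) - y ^ (k + 2)) / (((k + 2 : ℕ)) : Cp)‖ := by
      rw [hfaceq, hcast3, norm_mul, norm_pow, norm_neg, norm_one, one_pow, one_mul]
    rw [hnormd]
    -- now bound (ρ^{k+1} ‖x-y‖)(k+2) ≤ p^{-1}‖x-y‖, using k+2 ≤ p^{k+1}
    have hk2' : ((k + 2 : ℕ) : ℝ) ≤ (p : ℝ) ^ (k + 1) := by
      have h2p : (2 : ℕ) ≤ p := hprime.two_le
      have hnat : k + 2 ≤ 2 ^ (k + 1) := by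
        have := Nat.lt_two_pow_self (n := k + 1)
        omega
      have hnat2 : (2 : ℕ) ^ (k + 1) ≤ p ^ (k + 1) := Nat.pow_le_pow_left h2p (k + 1)
      calc ((k + 2 : ℕ) : ℝ) ≤ ((2 ^ (k + 1) : ℕ) : ℝ) := by exact_mod_cast hnat
        _ ≤ ((p ^ (k + 1) : ℕ) : ℝ) := by exact_mod_cast hnat2
        _ = (p : ℝ) ^ (k + 1) := by push_cast; ring
    calc ‖(x ^ (k + 2) - y ^ (k + 2)) / (((k + 2 : ℕ)) : Cp)‖
        ≤ ((((p : ℝ)⁻¹) ^ 2) ^ (k + 1) * ‖x - y‖) * ((k + 2 : ℕ) : ℝ) := hknorm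
      _ ≤ ((((p : ℝ)⁻¹) ^ 2) ^ (k + 1) * ‖x - y‖) * ((p : ℝ) ^ (k + 1)) := by
          apply mul_le_mul_of_nonneg_left hk2' (by positivity)
      _ = ((p : ℝ)⁻¹) ^ (k + 1) * ‖x - y‖ := by
          have h1 : (((p : ℝ)⁻¹) ^ 2) ^ (k + 1)
              = ((p : ℝ)⁻¹) ^ (k + 1) * ((p : ℝ)⁻¹) ^ (k + 1) := by
            rw [← pow_mul, ← pow_add]
            congr 1
            ring
          have h2 : ((p : ℝ)⁻¹) ^ (k + 1) * (p : ℝ) ^ (k + 1) = 1 := by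
            rw [← mul_pow, inv_mul_cancel₀ (ne_of_gt pR_pos), one_pow]
          rw [h1]
          linear_combination (((p : ℝ)⁻¹) ^ (k + 1) * ‖x - y‖) * h2
      _ ≤ (p : ℝ)⁻¹ * ‖x - y‖ := by
          apply mul_le_mul_of_nonneg_right _ (norm_nonneg _)
          calc ((p : ℝ)⁻¹) ^ (k + 1) ≤ ((p : ℝ)⁻¹) ^ 1 :=
                pow_le_pow_of_le_one pinv_nonneg pinv_lt_one.le (by omega)
            _ = (p : ℝ)⁻¹ := pow_one _
  have hzero : (x - y) + ∑' k, d (k + 1) = 0 := by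
    rw [← hd0, ← Sd.tsum_eq_zero_add]
    exact hsum
  have hxy : ‖x - y‖ ≤ (p : ℝ)⁻¹ * ‖x - y‖ := by
    have hneg : x - y = -(∑' k, d (k + 1)) := by linear_combination hzero
    calc ‖x - y‖ = ‖∑' k, d (k + 1)‖ := by rw [hneg, norm_neg]
      _ ≤ (p : ℝ)⁻¹ * ‖x - y‖ := htail
  have hfin : ‖x - y‖ = 0 := by
    nlinarith [norm_nonneg (x - y), pinv_lt_one (p := p)]
  have hxyeq : x = y := by
    have h0 := norm_eq_zero.mp hfin
    have : x - y = 0 := h0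
    linear_combination this
  have : w - 1 = w' - 1 := hxyeq
  linear_combination this

end Aux

/-- Let `exp_p : ℂ_p → ℂ_p^×` be any group homomorphism from the
additive group to the multiplicative group which coincides with `∑_{n ≥ 0} z^n / n!` on
some neighbourhood of `0`.  Then for every `z ∈ ℂ_p^×` there is an `N ∈ ℕ` with
`(exp_p (log_p z))^{p^N} = ⟨z⟩^{p^N}`; in particular if `ord_p z = 0` then
`exp_p (log_p z) / z` is a root of unity. -/
theorem expp_logp_root_of_unity
    (p : ℕ) [Fact p.Prime] (Cp : Type*) [NormedField Cp] [IsUltrametricDist Cp]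
    [IsAlgClosed Cp] [CompleteSpace Cp] [CharZero Cp]
    (hp : ‖(p : Cp)‖ = (p : ℝ)⁻¹) (hdense : Dense {x : Cp | IsAlgebraic ℚ x})
    (E : CpData p Cp)
    (expp : Cp → Cp)
    (hhom : ∀ x y : Cp, expp (x + y) = expp x * expp y)
    (hser : ∃ ε : ℝ, 0 < ε ∧ ∀ z : Cp, ‖z‖ < ε →
      HasSum (fun n : ℕ => z ^ n / (n.factorial : Cp)) (expp z)) :
    ∀ z : Cp, z ≠ 0 →
      (∃ N : ℕ, (expp (E.logp z)) ^ (p ^ N) = (E.angle z) ^ (p ^ N)) ∧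
      (E.ord z = 0 → ∃ n : ℕ, 0 < n ∧ (expp (E.logp z) / z) ^ n = 1) := by
  intro z hz
  have hprime : p.Prime := Fact.out
  obtain ⟨ε, hε, hs⟩ := hser
  have hexp0 : expp 0 = 1 := by
    have h0 := hs 0 (by simpa using hε)
    have h1 : HasSum (fun n : ℕ => (0 : Cp) ^ n / (n.factorial : Cp)) 1 := by
      have heq : (fun n : ℕ => (0 : Cp) ^ n / (n.factorial : Cp))
          = fun n : ℕ => if n = 0 then (1 : Cp) else 0 := by
        funext n
        cases n with
        | zero => simp
        | succ n => simp
      rw [heq]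
      exact hasSum_ite_eq 0 1
    exact h0.unique h1
  have hexpmul : ∀ (n : ℕ) (t : Cp), expp ((n : Cp) * t) = expp t ^ n := by
    intro n
    induction n with
    | zero => intro t; simp [hexp0]
    | succ n ih =>
      intro t
      have hcast : ((n + 1 : ℕ) : Cp) * t = (n : Cp) * t + t := by push_cast; ring
      rw [hcast, hhom, ih, pow_succ]
  have hu1 : ‖E.angle z - 1‖ < 1 := E.angle_lt z hz
  have hL : E.logp z = Lfun (E.angle z) := rfl
  set u := E.angle z with hu
  set a := Lfun u with ha
  have part1 : ∃ N : ℕ, (expp (E.logp z)) ^ (p ^ N) = u ^ (p ^ N) := by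
    have hpn : ‖(p : Cp)‖ < 1 := by rw [hp]; exact pinv_lt_one
    have hna : Tendsto (fun n : ℕ => ‖(p : Cp) ^ n * a‖) atTop (𝓝 0) := by
      have h1 := (tendsto_pow_atTop_nhds_zero_of_norm_lt_one hpn).mul_const a
      rw [zero_mul] at h1
      simpa using h1.norm
    obtain ⟨N₀, hN₀⟩ := (hna.eventually_lt_const hε).exists
    set τ := (p : Cp) ^ N₀ * a with hτdef
    have htend : Tendsto (fun k : ℕ => ‖τ ^ k / (k.factorial : Cp)‖) atTop (𝓝 0) := by
      have h2 := (hs τ hN₀).summable.tendsto_atTop_zero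
      rwa [tendsto_zero_iff_norm_tendsto_zero] at h2
    obtain ⟨M, hM0, hM⟩ := exists_bound _ htend (fun k => norm_nonneg _)
    have hexp_est : ∀ m : ℕ, ‖expp ((p : Cp) ^ m * τ) - 1 - (p : Cp) ^ m * τ‖
        ≤ ((p : ℝ)⁻¹) ^ (2 * m) * M := by
      intro m
      set s := (p : Cp) ^ m * τ with hsdef
      have hsnorm : ‖s‖ = ((p : ℝ)⁻¹) ^ m * ‖τ‖ := by
        rw [hsdef, norm_mul, norm_pow, hp]
      have hsε : ‖s‖ < ε := by
        rw [hsnorm]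
        calc ((p : ℝ)⁻¹) ^ m * ‖τ‖ ≤ 1 * ‖τ‖ :=
              mul_le_mul_of_nonneg_right (pow_le_one₀ pinv_nonneg pinv_lt_one.le) (norm_nonneg τ)
          _ = ‖τ‖ := one_mul _
          _ < ε := hN₀
      have hsum2 := hs s hsε
      have hshift := (hasSum_nat_add_iff' 2).mpr hsum2
      have hsum01 : ∑ i ∈ Finset.range 2, s ^ i / (i.factorial : Cp) = 1 + s := by
        norm_num [Finset.sum_range_succ]
      rw [hsum01] at hshift
      have hgoal_eq : expp s - 1 - s = ∑' n, s ^ (n + 2) / (((n + 2).factorial : ℕ) : Cp) := by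
        rw [hshift.tsum_eq]; ring
      rw [hgoal_eq]
      apply IsUltrametricDist.norm_tsum_le_of_forall_le_of_nonneg (by positivity)
      intro n
      have h1 : s ^ (n + 2) / (((n + 2).factorial : ℕ) : Cp)
          = (p : Cp) ^ (m * (n + 2)) * (τ ^ (n + 2) / (((n + 2).factorial : ℕ) : Cp)) := by
        rw [hsdef, mul_pow, ← pow_mul]
        ring
      rw [h1, norm_mul, norm_pow, hp]
      apply mul_le_mul
      · apply pow_le_pow_of_le_one pinv_nonneg pinv_lt_one.le
        calc 2 * m = m * 2 := by ring
          _ ≤ m * (n + 2) := Nat.mul_le_mul (le_refl m) (by omega)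
      · exact hM (n + 2)
      · exact norm_nonneg _
      · positivity
    set ρ : ℝ := ((p : ℝ)⁻¹) ^ 2 with hρ
    have hρ0 : 0 < ρ := by rw [hρ]; exact pow_pos (inv_pos.2 pR_pos) 2
    have hρ1 : ρ < 1 := pow_lt_one₀ pinv_nonneg pinv_lt_one (by norm_num)
    have ev_a : ∀ᶠ m : ℕ in atTop, ((p : ℝ)⁻¹) ^ (2 * m) * M ≤ ρ := by
      have ht1 : Tendsto (fun m : ℕ => ((p : ℝ)⁻¹) ^ (2 * m) * M) atTop (𝓝 0) := by
        have heq2 : (fun m : ℕ => ((p : ℝ)⁻¹) ^ (2 * m) * M)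
            = fun m : ℕ => (((p : ℝ)⁻¹) ^ 2) ^ m * M := by
          funext m; rw [← pow_mul]
        rw [heq2]
        have h3 := (tendsto_pow_atTop_nhds_zero_of_lt_one (by positivity : (0:ℝ) ≤ ((p : ℝ)⁻¹) ^ 2) hρ1).mul_const M
        simpa using h3
      exact (ht1.eventually_lt_const hρ0).mono fun m hm => hm.le
    have ev_b : ∀ᶠ m : ℕ in atTop, ‖(p : Cp) ^ m * τ‖ ≤ ρ := by
      have ht1 : Tendsto (fun m : ℕ => ‖(p : Cp) ^ m * τ‖) atTop (𝓝 0) := by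
        have h1 := (tendsto_pow_atTop_nhds_zero_of_norm_lt_one hpn).mul_const τ
        rw [zero_mul] at h1
        simpa using h1.norm
      exact (ht1.eventually_lt_const hρ0).mono fun m hm => hm.le
    have ev_c : ∀ᶠ m : ℕ in atTop, ‖u ^ (p ^ (m + N₀)) - 1‖ ≤ ρ := by
      have ht1 : Tendsto (fun m : ℕ => ‖u ^ (p ^ (m + N₀)) - 1‖) atTop (𝓝 0) := by
        have h1 := (tendsto_pow_sub_one hp hu1).comp (Filter.tendsto_add_atTop_nat N₀)
        simpa [Function.comp] using h1.norm
      exact (ht1.eventually_lt_const hρ0).mono fun m hm => hm.le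
    obtain ⟨m, hb1, hb2, hb3⟩ := (ev_a.and (ev_b.and ev_c)).exists
    obtain ⟨hb2, hb3⟩ := (⟨hb2, hb3⟩ : _ ∧ _)
    set N := m + N₀ with hN
    set t := (p : Cp) ^ N * a with ht
    have htm : t = (p : Cp) ^ m * τ := by
      rw [ht, hτdef, hN, pow_add]
      ring
    have hexpball : ‖expp t - 1‖ ≤ ρ := by
      have est := hexp_est m
      rw [← htm] at est
      have hrw : expp t - 1 = (expp t - 1 - t) + t := by ring
      rw [hrw]
      refine le_trans (IsUltrametricDist.norm_add_le_max _ _) (max_le ?_ ?_)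
      · exact le_trans est hb1
      · rw [htm]; exact hb2
    have hLexp : Lfun (expp t) = t := by
      have hball : ‖expp t - 1‖ < 1 := lt_of_le_of_lt hexpball hρ1
      have hlim1 := tendsto_Lfun hp hball
      have heq : (fun j : ℕ => ((expp t) ^ (p ^ j) - 1) / ((p : Cp) ^ j))
          = fun j : ℕ => (expp ((p : Cp) ^ j * t) - 1) / ((p : Cp) ^ j) := by
        funext j
        congr 2
        rw [← hexpmul (p ^ j) t]
        congr 1
        push_cast
        ring
      have hlim2 : Tendsto (fun j : ℕ => (expp ((p : Cp) ^ j * t) - 1) / ((p : Cp) ^ j))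
          atTop (𝓝 t) := by
        rw [← tendsto_sub_nhds_zero_iff, tendsto_zero_iff_norm_tendsto_zero]
        apply squeeze_zero (g := fun j : ℕ => ((p : ℝ)⁻¹) ^ j * (((p : ℝ)⁻¹) ^ (2 * m) * M))
          (fun j => norm_nonneg _)
        · intro j
          have hjt : (p : Cp) ^ j * t = (p : Cp) ^ (j + m) * τ := by
            rw [htm, pow_add]; ring
          have est := hexp_est (j + m)
          rw [← hjt] at est
          have hpnej : ((p : Cp) ^ j) ≠ 0 := by
            apply pow_ne_zero
            exact Nat.cast_ne_zero.mpr hprime.ne_zero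
          have hrw : (expp ((p : Cp) ^ j * t) - 1) / ((p : Cp) ^ j) - t
              = (expp ((p : Cp) ^ j * t) - 1 - (p : Cp) ^ j * t) / ((p : Cp) ^ j) := by
            field_simp
          rw [hrw, norm_div, norm_pow, hp]
          rw [div_le_iff₀ (pow_pos (inv_pos.2 pR_pos) j)]
          calc ‖expp ((p : Cp) ^ j * t) - 1 - (p : Cp) ^ j * t‖
              ≤ ((p : ℝ)⁻¹) ^ (2 * (j + m)) * M := est
            _ = ((p : ℝ)⁻¹) ^ j * (((p : ℝ)⁻¹) ^ (2 * m) * M) * ((p : ℝ)⁻¹) ^ j := by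
                rw [show 2 * (j + m) = j + 2 * m + j by ring, pow_add, pow_add]
                ring
        · have h3 := (tendsto_pow_atTop_nhds_zero_of_lt_one (pinv_nonneg (p := p))
            (pinv_lt_one (p := p))).mul_const (((p : ℝ)⁻¹) ^ (2 * m) * M)
          simpa using h3
      rw [heq] at hlim1
      exact tendsto_nhds_unique hlim1 hlim2
    have hLw : Lfun (u ^ (p ^ N)) = t := by
      rw [(Lfun_pow_pN hp hu1 N).2, ht, ha]
    have hexpt : expp t = u ^ (p ^ N) := by
      apply Lfun_inj hp hexpball hb3
      rw [hLexp, hLw]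
    refine ⟨N, ?_⟩
    rw [hL]
    calc expp a ^ (p ^ N) = expp (((p ^ N : ℕ) : Cp) * a) := (hexpmul (p ^ N) a).symm
      _ = expp t := by rw [ht]; congr 1; push_cast; ring
      _ = u ^ (p ^ N) := hexpt
  refine ⟨part1, ?_⟩
  intro hord
  obtain ⟨N, hN⟩ := part1
  obtain ⟨n0, hn0pos, _, hθ⟩ := E.θ_root z hz
  have hPpow0 : E.Ppow 0 = 1 := by
    have h := E.Ppow_add 0 0
    rw [add_zero] at h
    have h2 : E.Ppow 0 * E.Ppow 0 = E.Ppow 0 * 1 := by rw [mul_one, ← h]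
    exact mul_left_cancel h2
  have huz : u = (E.θ z)⁻¹ * z := by
    rw [hu]
    show ((E.Ppow (E.ord z) : Cp))⁻¹ * (E.θ z)⁻¹ * z = (E.θ z)⁻¹ * z
    rw [hord, hPpow0]
    simp
  set n := p ^ N * n0 with hn
  have hnpos : 0 < n := Nat.mul_pos (pow_pos hprime.pos N) hn0pos
  refine ⟨n, hnpos, ?_⟩
  have hexpn : expp (E.logp z) ^ n = u ^ n := by
    rw [hn, pow_mul, pow_mul, hN]
  have hθn : (E.θ z) ^ n = 1 := by
    rw [hn, mul_comm, pow_mul, hθ, one_pow]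
  have hun : u ^ n = z ^ n := by
    rw [huz, mul_pow, inv_pow, hθn, inv_one, one_mul]
  rw [div_pow, hexpn, hun, div_self (pow_ne_zero n hz)]

end Stmt
end
end
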